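/- Let H = P·S be a rank factorization of a rank-r matrix H, and suppose H also admits a rank factorization H = P'·S' where every row of P' is a standard basis vector of ℝʳ. Then every row of P equals one of the rows of the matrix B satisfying P = P'·B, and consequently B can be assembled by vertically stacking r linearly independent rows of P; moreover P·B⁻¹ = P' has all rows equal to standard basis vectors. -/
import Mathlib

lemma aux_mulVec_surj {q : Type*} [Fintype q] {p : ℕ} (A : Matrix (Fin p) q ℝ)
    (h : A.rank = p) : Function.Surjective A.mulVec := by
  have hr : LinearMap.range A.mulVecLin = ⊤ := by
    apply Submodule.eq_top_of_finrank_eq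
    simpa [Matrix.rank] using h.trans (Module.finrank_fin_fun ℝ).symm
  intro y
  obtain ⟨x, hx⟩ := LinearMap.range_eq_top.mp hr y
  exact ⟨x, hx⟩

/-- If `H = P * S` is a rank factorization of a rank-`r` matrix, and
`H = P' * S'` is another rank factorization where every row of `P'` is a standard
basis vector of `ℝʳ`, then there is an invertible `B` with `P = P' * B`, every row of
`P` equals one of the rows of `B`, and `P * B⁻¹ = P'` has all rows standard basis
vectors. -/
theorem stmt_1 {m n r : ℕ}
    (H : Matrix (Fin m) (Fin n) ℝ)
    (P P' : Matrix (Fin m) (Fin r) ℝ)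
    (S S' : Matrix (Fin r) (Fin n) ℝ)
    (hPS : H = P * S) (hPS' : H = P' * S')
    (hP : P.rank = r) (hP' : P'.rank = r)
    (hS : S.rank = r) (hS' : S'.rank = r)
    (hnat : ∀ i : Fin m, ∃ j : Fin r, P' i = Pi.single j 1) :
    ∃ B : Matrix (Fin r) (Fin r) ℝ,
      IsUnit B.det ∧
      P = P' * B ∧
      (∀ i : Fin m, ∃ k : Fin r, P i = B k) ∧
      P * B⁻¹ = P' ∧
      (∀ i : Fin m, ∃ j : Fin r, (P * B⁻¹) i = Pi.single j 1) := by
  obtain ⟨T, hT⟩ : ∃ T : Matrix (Fin n) (Fin r) ℝ, S * T = 1 :=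
    Matrix.mulVec_surjective_iff_exists_right_inverse.mp (aux_mulVec_surj S hS)
  refine ⟨S' * T, ?_, ?_, ?_, ?_, ?_⟩
  case refine_2 =>
    calc P = P * (S * T) := by rw [hT, Matrix.mul_one]
    _ = (P * S) * T := by rw [Matrix.mul_assoc]
    _ = (P' * S') * T := by rw [← hPS, hPS']
    _ = P' * (S' * T) := by rw [Matrix.mul_assoc]
  all_goals {
    have hPB : P = P' * (S' * T) := by
      calc P = P * (S * T) := by rw [hT, Matrix.mul_one]
      _ = (P * S) * T := by rw [Matrix.mul_assoc]
      _ = (P' * S') * T := by rw [← hPS, hPS']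
      _ = P' * (S' * T) := by rw [Matrix.mul_assoc]
    have hdet : IsUnit (S' * T).det := by
      rw [← Matrix.isUnit_iff_isUnit_det, ← Matrix.mulVec_surjective_iff_isUnit]
      apply aux_mulVec_surj
      refine le_antisymm ((S' * T).rank_le_card_width.trans_eq (Fintype.card_fin r)) ?_
      calc r = P.rank := hP.symm
      _ = (P' * (S' * T)).rank := by rw [← hPB]
      _ ≤ (S' * T).rank := Matrix.rank_mul_le_right _ _
    have hrows : ∀ i : Fin m, ∃ k : Fin r, P i = (S' * T) k := by
      intro i
      obtain ⟨j, hj⟩ := hnat i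
      refine ⟨j, ?_⟩
      funext k
      rw [hPB]
      simp [Matrix.mul_apply, hj, Pi.single_apply]
    have hPinv : P * (S' * T)⁻¹ = P' := by
      rw [hPB, Matrix.mul_assoc, Matrix.mul_nonsing_inv _ hdet, Matrix.mul_one]
    first
    | exact hdet
    | exact hrows
    | exact hPinv
    | (rw [hPinv]; exact hnat)
  }
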